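/- arXiv:2603.15145 — 4 statements merged into one kernel-verified Lean document; each statement's English description precedes it below -/
import Mathlib

section
/- Let P(m,t) = (−1/2 + m/(cos t + 1) + (m−1)cos t, (1−m)sin t, m√(2cos t + 1)/(cos t + 1)) for m ∈ [0,1] and t ∈ (−2π/3, 2π/3), regarded as a map into ℝ³. Then the cross product of the partial derivatives satisfies (∂P/∂m) × (∂P/∂t) = ( cos t·((3m−2)cos t − 1) / (2 cos²(t/2)·√(2cos t + 1)), sin t·((2−3m)cos t + 1) / ((cos t + 1)·√(2cos t + 1)), ((2−3m)cos t + 1) / (cos t + 1) ). -/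
open Real Matrix

/-- Parametrization of the upper sheet of the oloid surface. -/
noncomputable def oloidP (m t : ℝ) : Fin 3 → ℝ :=
  ![-1/2 + m / (Real.cos t + 1) + (m - 1) * Real.cos t,
    (1 - m) * Real.sin t,
    m * Real.sqrt (2 * Real.cos t + 1) / (Real.cos t + 1)]

lemma derivM (m t : ℝ) :
    deriv (fun m' => oloidP m' t) m =
      ![1/(Real.cos t + 1) + Real.cos t, -Real.sin t,
        Real.sqrt (2*Real.cos t + 1)/(Real.cos t + 1)] := by
  apply HasDerivAt.deriv
  rw [hasDerivAt_pi]
  intro i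
  fin_cases i <;> simp only [oloidP, Matrix.cons_val_zero, Matrix.cons_val_one, Matrix.head_cons,
    Matrix.cons_val_two, Matrix.tail_cons]
  · have h : HasDerivAt (fun m' : ℝ => -1/2 + m' / (Real.cos t + 1) + (m' - 1) * Real.cos t)
        (0 + 1/(Real.cos t + 1) + 1 * Real.cos t) m := by
      exact ((hasDerivAt_const m (-1/2:ℝ)).add ((hasDerivAt_id m).div_const _)).add
        (((hasDerivAt_id m).sub_const 1).mul_const _)
    simpa using h
  · have h : HasDerivAt (fun m' : ℝ => (1 - m') * Real.sin t) ((0 - 1) * Real.sin t) m :=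
      ((hasDerivAt_const m (1:ℝ)).sub (hasDerivAt_id m)).mul_const _
    simpa using h
  · have h : HasDerivAt (fun m' : ℝ => m' * Real.sqrt (2*Real.cos t + 1) / (Real.cos t + 1))
        (1 * Real.sqrt (2*Real.cos t + 1) / (Real.cos t + 1)) m :=
      ((hasDerivAt_id m).mul_const _).div_const _
    simpa using h

lemma derivT (m t : ℝ) (hd : Real.cos t + 1 > 0) (hs2 : 2*Real.cos t + 1 > 0) :
    deriv (fun t' => oloidP m t') t =
      ![m * Real.sin t / (Real.cos t + 1)^2 + (1 - m) * Real.sin t,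
        (1 - m) * Real.cos t,
        m * Real.sin t * Real.cos t / (Real.sqrt (2*Real.cos t + 1) * (Real.cos t + 1)^2)] := by
  have hs : Real.sqrt (2*Real.cos t + 1) > 0 := Real.sqrt_pos.mpr hs2
  have hssq : Real.sqrt (2*Real.cos t + 1) ^ 2 = 2*Real.cos t + 1 := Real.sq_sqrt hs2.le
  apply HasDerivAt.deriv
  rw [hasDerivAt_pi]
  have h1 : HasDerivAt (fun t' : ℝ => Real.cos t' + 1) (-Real.sin t) t :=
    (Real.hasDerivAt_cos t).add_const 1
  intro i
  fin_cases i <;> simp only [oloidP, Matrix.cons_val_zero, Matrix.cons_val_one, Matrix.head_cons,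
    Matrix.cons_val_two, Matrix.tail_cons, Fin.reduceFinMk, Fin.isValue, Matrix.cons_val]
  · have h : HasDerivAt (fun t' : ℝ => -1/2 + m / (Real.cos t' + 1) + (m - 1) * Real.cos t')
        (0 + (0 * (Real.cos t + 1) - m * (-Real.sin t))/(Real.cos t + 1)^2 +
          (m - 1) * (-Real.sin t)) t := by
      exact (((hasDerivAt_const t (-1/2:ℝ)).add
        ((hasDerivAt_const t m).div h1 hd.ne')).add
        ((Real.hasDerivAt_cos t).const_mul (m-1)))
    refine h.congr_deriv ?_
    symm
    ring
  · have h : HasDerivAt (fun t' : ℝ => (1 - m) * Real.sin t') ((1 - m) * Real.cos t) t :=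
      (Real.hasDerivAt_sin t).const_mul _
    exact h
  · have hg : HasDerivAt (fun t' : ℝ => 2*Real.cos t' + 1) (2*(-Real.sin t)) t :=
      ((Real.hasDerivAt_cos t).const_mul 2).add_const 1
    have hsq := hg.sqrt hs2.ne'
    have h : HasDerivAt (fun t' : ℝ => m * Real.sqrt (2*Real.cos t' + 1) / (Real.cos t' + 1))
        (((m * (2*(-Real.sin t) / (2 * Real.sqrt (2*Real.cos t + 1)))) * (Real.cos t + 1)
          - m * Real.sqrt (2*Real.cos t + 1) * (-Real.sin t)) / (Real.cos t + 1)^2) t :=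
      (hsq.const_mul m).div h1 hd.ne'
    refine h.congr_deriv ?_
    symm
    show m * Real.sin t * Real.cos t / (Real.sqrt (2*Real.cos t + 1) * (Real.cos t + 1)^2) = _
    have hss : Real.sqrt (2*Real.cos t+1) * Real.sqrt (2*Real.cos t+1) = 2*Real.cos t+1 :=
      Real.mul_self_sqrt hs2.le
    generalize Real.sqrt (2*Real.cos t+1) = S at *
    field_simp
    have hS2 : S^2 = 2*Real.cos t+1 := by rw [sq]; exact hss
    linear_combination (-(m*Real.sin t)) * hss

theorem oloid_cross_product_of_partials :
    ∀ m ∈ Set.Icc (0:ℝ) 1, ∀ t ∈ Set.Ioo (-(2*π/3)) (2*π/3),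
      (deriv (fun m' => oloidP m' t) m) ⨯₃ (deriv (fun t' => oloidP m t') t) =
        ![Real.cos t * ((3*m - 2) * Real.cos t - 1) /
            (2 * Real.cos (t/2) ^ 2 * Real.sqrt (2 * Real.cos t + 1)),
          Real.sin t * ((2 - 3*m) * Real.cos t + 1) /
            ((Real.cos t + 1) * Real.sqrt (2 * Real.cos t + 1)),
          ((2 - 3*m) * Real.cos t + 1) / (Real.cos t + 1)] := by
  intro m hm t ht
  have hpi : (2*π/3) ≤ π := by nlinarith [Real.pi_pos]
  have habs : |t| < 2*π/3 := abs_lt.mpr ⟨ht.1, ht.2⟩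
  have hcv : Real.cos (2*π/3) = -(1/2) := by
    rw [show (2*π/3) = π - π/3 by ring, Real.cos_pi_sub, Real.cos_pi_div_three]
  have hcos : Real.cos t > -(1/2) := by
    rw [← Real.cos_abs t, ← hcv]
    exact Real.cos_lt_cos_of_nonneg_of_le_pi (abs_nonneg t) hpi habs
  have hd : Real.cos t + 1 > 0 := by linarith
  have hs2 : 2*Real.cos t + 1 > 0 := by linarith
  have hs : Real.sqrt (2*Real.cos t + 1) > 0 := Real.sqrt_pos.mpr hs2
  have hss : Real.sqrt (2*Real.cos t+1) * Real.sqrt (2*Real.cos t+1) = 2*Real.cos t+1 :=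
    Real.mul_self_sqrt hs2.le
  have hsin : Real.sin t ^ 2 = 1 - Real.cos t ^ 2 := by
    nlinarith [Real.sin_sq_add_cos_sq t]
  have hhalf : Real.cos (t/2)^2 = 1/2 + Real.cos t/2 := by
    rw [Real.cos_sq (t/2), show 2*(t/2) = t by ring]
  rw [derivM m t, derivT m t hd hs2, cross_apply]
  funext i
  fin_cases i <;>
    simp only [Matrix.cons_val_zero, Matrix.cons_val_one, Matrix.head_cons,
      Matrix.cons_val_two, Matrix.tail_cons, Matrix.cons_val', Matrix.empty_val',
      Matrix.cons_val_fin_one, Fin.reduceFinMk, Fin.isValue, Matrix.cons_val] <;>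
    skip
  · rw [hhalf]
    generalize Real.sqrt (2*Real.cos t+1) = S at *
    field_simp
    rw [eq_div_iff (by linarith : (1:ℝ) + Real.cos t ≠ 0)]
    linear_combination (-(Real.cos t*m*(1+Real.cos t)))*hsin
      + (-(Real.cos t*(Real.cos t+1)^2*(1-m)))*hss
  · generalize Real.sqrt (2*Real.cos t+1) = S at *
    field_simp
    have hS2 : S^2 = 2*Real.cos t+1 := by rw [sq]; exact hss
    simp only [hS2, hsin]
    ring_nf
  · field_simp
    simp only [hsin]
    ring_nf
end

section
/- Let P(m,t) = (−1/2 + m/(cos t + 1) + (m−1)cos t, (1−m)sin t, m√(2cos t + 1)/(cos t + 1)) for m ∈ [0,1] and t ∈ (−2π/3, 2π/3). Then the Euclidean norm of the cross product of the partial derivatives satisfies ‖(∂P/∂m) × (∂P/∂t)‖ = ((2−3m)cos t + 1) / (cos(t/2)·√(2cos t + 1)). -/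
open Real Matrix

/-- Euclidean norm of a vector in `Fin 3 → ℝ`. -/
noncomputable def euclNorm (v : Fin 3 → ℝ) : ℝ :=
  ‖((WithLp.equiv 2 (Fin 3 → ℝ)).symm v : EuclideanSpace ℝ (Fin 3))‖

lemma euclNorm_eq (v : Fin 3 → ℝ) :
    euclNorm v = Real.sqrt (v 0 ^ 2 + v 1 ^ 2 + v 2 ^ 2) := by
  simp [euclNorm, EuclideanSpace.norm_eq, Fin.sum_univ_three, Real.norm_eq_abs, sq_abs]

lemma oloid_hasDerivAt_m (m t : ℝ) :
    HasDerivAt (fun m' => oloidP m' t)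
      ![1/(Real.cos t + 1) + Real.cos t, -Real.sin t,
        Real.sqrt (2 * Real.cos t + 1) / (Real.cos t + 1)] m := by
  rw [hasDerivAt_pi]
  intro i
  fin_cases i
  · show HasDerivAt (fun m' : ℝ => -1/2 + m' / (Real.cos t + 1) + (m' - 1) * Real.cos t)
      (1/(Real.cos t + 1) + Real.cos t) m
    have h1 := ((hasDerivAt_id m).div_const (Real.cos t + 1)).const_add (-1/2 : ℝ)
    have h2 := ((hasDerivAt_id m).sub_const 1).mul_const (Real.cos t)
    exact (h1.add h2).congr_deriv (by ring)
  · show HasDerivAt (fun m' : ℝ => (1 - m') * Real.sin t) (-Real.sin t) m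
    exact (((hasDerivAt_id m).const_sub 1).mul_const (Real.sin t)).congr_deriv (by ring)
  · show HasDerivAt (fun m' : ℝ => m' * Real.sqrt (2 * Real.cos t + 1) / (Real.cos t + 1))
      (Real.sqrt (2 * Real.cos t + 1) / (Real.cos t + 1)) m
    exact (((hasDerivAt_id m).mul_const (Real.sqrt (2 * Real.cos t + 1))).div_const
      (Real.cos t + 1)).congr_deriv (by ring)

lemma oloid_hasDerivAt_t (m t : ℝ) (hc1 : (0:ℝ) < Real.cos t + 1)
    (h2c : (0:ℝ) < 2 * Real.cos t + 1) :
    HasDerivAt (fun t' => oloidP m t')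
      ![m * Real.sin t / (Real.cos t + 1)^2 - (m - 1) * Real.sin t,
        (1 - m) * Real.cos t,
        m * (Real.sin t * Real.cos t) * Real.sqrt (2 * Real.cos t + 1) /
          ((2 * Real.cos t + 1) * (Real.cos t + 1)^2)] t := by
  have hq : (0:ℝ) < Real.sqrt (2 * Real.cos t + 1) := Real.sqrt_pos.2 h2c
  have hq2 : Real.sqrt (2 * Real.cos t + 1) ^ 2 = 2 * Real.cos t + 1 := Real.sq_sqrt h2c.le
  have hden : HasDerivAt (fun t' => Real.cos t' + 1) (-Real.sin t) t :=
    (Real.hasDerivAt_cos t).add_const 1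
  rw [hasDerivAt_pi]
  intro i
  fin_cases i
  · show HasDerivAt (fun t' : ℝ => -1/2 + m / (Real.cos t' + 1) + (m - 1) * Real.cos t')
      (m * Real.sin t / (Real.cos t + 1)^2 - (m - 1) * Real.sin t) t
    have h1 : HasDerivAt (fun t' : ℝ => m / (Real.cos t' + 1))
        ((0 * (Real.cos t + 1) - m * -Real.sin t) / (Real.cos t + 1)^2) t :=
      (hasDerivAt_const t m).div hden hc1.ne'
    have h2 : HasDerivAt (fun t' : ℝ => (m - 1) * Real.cos t')
        ((m - 1) * -Real.sin t) t := (Real.hasDerivAt_cos t).const_mul _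
    exact ((h1.const_add (-1/2 : ℝ)).add h2).congr_deriv (by ring)
  · show HasDerivAt (fun t' : ℝ => (1 - m) * Real.sin t') ((1 - m) * Real.cos t) t
    exact (Real.hasDerivAt_sin t).const_mul (1 - m)
  · show HasDerivAt (fun t' : ℝ => m * Real.sqrt (2 * Real.cos t' + 1) / (Real.cos t' + 1))
      (m * (Real.sin t * Real.cos t) * Real.sqrt (2 * Real.cos t + 1) /
        ((2 * Real.cos t + 1) * (Real.cos t + 1)^2)) t
    have hinner : HasDerivAt (fun t' : ℝ => 2 * Real.cos t' + 1) (2 * -Real.sin t) t :=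
      ((Real.hasDerivAt_cos t).const_mul 2).add_const 1
    have hs : HasDerivAt (fun t' => Real.sqrt (2 * Real.cos t' + 1))
        (2 * -Real.sin t / (2 * Real.sqrt (2 * Real.cos t + 1))) t :=
      hinner.sqrt h2c.ne'
    have h := (hs.const_mul m).div hden hc1.ne'
    rw [mul_div_mul_left _ _ (two_ne_zero)] at h
    rw [show -Real.sin t / Real.sqrt (2 * Real.cos t + 1)
        = -Real.sin t * Real.sqrt (2 * Real.cos t + 1) / (2 * Real.cos t + 1) by
      rw [div_eq_div_iff hq.ne' h2c.ne']
      linear_combination Real.sin t * hq2] at h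
    exact h.congr_deriv (by field_simp; ring)

set_option maxHeartbeats 2000000 in
theorem oloid_norm_cross_product_of_partials :
    ∀ m ∈ Set.Icc (0:ℝ) 1, ∀ t ∈ Set.Ioo (-(2*π/3)) (2*π/3),
      euclNorm ((deriv (fun m' => oloidP m' t) m) ⨯₃ (deriv (fun t' => oloidP m t') t)) =
        ((2 - 3*m) * Real.cos t + 1) / (Real.cos (t/2) * Real.sqrt (2 * Real.cos t + 1)) := by
  intro m hm t ht
  obtain ⟨hm0, hm1⟩ := hm
  obtain ⟨ht1, ht2⟩ := ht
  have hpi := Real.pi_pos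
  have hc : -(1/2 : ℝ) < Real.cos t := by
    have h1 : Real.cos (2*π/3) = -(1/2) := by
      rw [show (2*π/3 : ℝ) = π - π/3 by ring, Real.cos_pi_sub, Real.cos_pi_div_three]
    have habs : |t| < 2*π/3 := abs_lt.2 ⟨by linarith, ht2⟩
    calc -(1/2:ℝ) = Real.cos (2*π/3) := h1.symm
      _ < Real.cos |t| :=
        Real.cos_lt_cos_of_nonneg_of_le_pi (abs_nonneg t) (by linarith) habs
      _ = Real.cos t := Real.cos_abs t
  have hc1 : (0:ℝ) < Real.cos t + 1 := by linarith
  have h2c : (0:ℝ) < 2 * Real.cos t + 1 := by linarith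
  have hq : (0:ℝ) < Real.sqrt (2 * Real.cos t + 1) := Real.sqrt_pos.2 h2c
  have hq2 : Real.sqrt (2 * Real.cos t + 1) ^ 2 = 2 * Real.cos t + 1 := Real.sq_sqrt h2c.le
  have hs2 : Real.sin t ^ 2 = 1 - Real.cos t ^ 2 := Real.sin_sq t
  have hhalf : (0:ℝ) < Real.cos (t/2) := by
    apply Real.cos_pos_of_mem_Ioo
    constructor <;> [linarith; linarith]
  have hcos2 : Real.cos (t/2) ^ 2 = 1/2 + Real.cos t / 2 := by
    have h := Real.cos_sq (t/2)
    rwa [show 2*(t/2) = t by ring] at h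
  have hN : (0:ℝ) ≤ (2 - 3*m) * Real.cos t + 1 := by
    nlinarith [mul_nonneg (sub_nonneg.2 hm1) h2c.le,
      mul_nonneg hm0 (sub_nonneg.2 (Real.cos_le_one t))]
  have hR : (0:ℝ) ≤ ((2 - 3*m) * Real.cos t + 1) /
      (Real.cos (t/2) * Real.sqrt (2 * Real.cos t + 1)) :=
    div_nonneg hN (by positivity)
  rw [(oloid_hasDerivAt_m m t).deriv, (oloid_hasDerivAt_t m t hc1 h2c).deriv, cross_apply,
    euclNorm_eq]
  simp only [Matrix.cons_val_zero, Matrix.cons_val_one, Matrix.head_cons,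
    Matrix.cons_val_two, Matrix.tail_cons]
  have hhh : (0:ℝ) < 1/2 + Real.cos t / 2 := by linarith
  have e0 : -Real.sin t * (m * (Real.sin t * Real.cos t) * Real.sqrt (2 * Real.cos t + 1) /
        ((2 * Real.cos t + 1) * (Real.cos t + 1) ^ 2)) -
        Real.sqrt (2 * Real.cos t + 1) / (Real.cos t + 1) * ((1 - m) * Real.cos t)
      = Real.sqrt (2 * Real.cos t + 1) *
        (-(m * (1 - Real.cos t ^ 2) * Real.cos t / ((2 * Real.cos t + 1) * (Real.cos t + 1) ^ 2)
          + (1 - m) * Real.cos t / (Real.cos t + 1))) := by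
    linear_combination (-(m * Real.cos t * Real.sqrt (2 * Real.cos t + 1) /
      ((2 * Real.cos t + 1) * (Real.cos t + 1) ^ 2))) * hs2
  have e1 : Real.sqrt (2 * Real.cos t + 1) / (Real.cos t + 1) *
        (m * Real.sin t / (Real.cos t + 1) ^ 2 - (m - 1) * Real.sin t) -
        (1 / (Real.cos t + 1) + Real.cos t) *
          (m * (Real.sin t * Real.cos t) * Real.sqrt (2 * Real.cos t + 1) /
            ((2 * Real.cos t + 1) * (Real.cos t + 1) ^ 2))
      = Real.sqrt (2 * Real.cos t + 1) * (Real.sin t *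
          ((m / (Real.cos t + 1) ^ 2 - (m - 1)) / (Real.cos t + 1)
            - (1 / (Real.cos t + 1) + Real.cos t) * m * Real.cos t /
              ((2 * Real.cos t + 1) * (Real.cos t + 1) ^ 2))) := by
    ring
  have e2 : (1 / (Real.cos t + 1) + Real.cos t) * ((1 - m) * Real.cos t) -
        -Real.sin t * (m * Real.sin t / (Real.cos t + 1) ^ 2 - (m - 1) * Real.sin t)
      = (1 / (Real.cos t + 1) + Real.cos t) * ((1 - m) * Real.cos t)
          + (1 - Real.cos t ^ 2) * (m / (Real.cos t + 1) ^ 2 - (m - 1)) := by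
    linear_combination (m / (Real.cos t + 1) ^ 2 - (m - 1)) * hs2
  rw [e0, e1, e2]
  have h1 : (Real.sqrt (2 * Real.cos t + 1) *
        (-(m * (1 - Real.cos t ^ 2) * Real.cos t / ((2 * Real.cos t + 1) * (Real.cos t + 1) ^ 2)
          + (1 - m) * Real.cos t / (Real.cos t + 1)))) ^ 2 +
      (Real.sqrt (2 * Real.cos t + 1) * (Real.sin t *
          ((m / (Real.cos t + 1) ^ 2 - (m - 1)) / (Real.cos t + 1)
            - (1 / (Real.cos t + 1) + Real.cos t) * m * Real.cos t /
              ((2 * Real.cos t + 1) * (Real.cos t + 1) ^ 2)))) ^ 2 +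
      ((1 / (Real.cos t + 1) + Real.cos t) * ((1 - m) * Real.cos t)
          + (1 - Real.cos t ^ 2) * (m / (Real.cos t + 1) ^ 2 - (m - 1))) ^ 2
      = Real.sqrt (2 * Real.cos t + 1) ^ 2 *
          (-(m * (1 - Real.cos t ^ 2) * Real.cos t / ((2 * Real.cos t + 1) * (Real.cos t + 1) ^ 2)
            + (1 - m) * Real.cos t / (Real.cos t + 1))) ^ 2 +
        Real.sqrt (2 * Real.cos t + 1) ^ 2 * (Real.sin t ^ 2 *
          ((m / (Real.cos t + 1) ^ 2 - (m - 1)) / (Real.cos t + 1)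
            - (1 / (Real.cos t + 1) + Real.cos t) * m * Real.cos t /
              ((2 * Real.cos t + 1) * (Real.cos t + 1) ^ 2)) ^ 2) +
        ((1 / (Real.cos t + 1) + Real.cos t) * ((1 - m) * Real.cos t)
          + (1 - Real.cos t ^ 2) * (m / (Real.cos t + 1) ^ 2 - (m - 1))) ^ 2 := by
    ring
  rw [h1, hq2, hs2]
  have h2 : ((2 - 3 * m) * Real.cos t + 1) /
        (Real.cos (t / 2) * Real.sqrt (2 * Real.cos t + 1))
      = Real.sqrt (((2 - 3 * m) * Real.cos t + 1) ^ 2 /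
          ((1/2 + Real.cos t / 2) * (2 * Real.cos t + 1))) := by
    rw [show ((2 - 3 * m) * Real.cos t + 1) ^ 2 /
          ((1/2 + Real.cos t / 2) * (2 * Real.cos t + 1))
        = (((2 - 3 * m) * Real.cos t + 1) /
            (Real.cos (t / 2) * Real.sqrt (2 * Real.cos t + 1))) ^ 2 by
      rw [div_pow, mul_pow, hcos2, hq2]]
    rw [Real.sqrt_sq hR]
  rw [h2]
  congr 1
  field_simp [hc1.ne', h2c.ne', hhh.ne']
  rw [eq_div_iff (by linarith : (0:ℝ) < 1 + Real.cos t).ne']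
  ring
end

section
/- The single-variable area integral evaluates to 4π: ∫_{−2π/3}^{2π/3} (cos t + 2) / (cos(t/2)·√(2 cos t + 1)) dt = 4π. -/
open Real

noncomputable def oloidF (t : ℝ) : ℝ :=
  2 * Real.arcsin (2 * Real.sin (t/2) / Real.sqrt 3)
    + 2 * Real.arcsin (Real.tan (t/2) / Real.sqrt 3)

lemma oloid_cos_half_ge {t : ℝ} (ht : t ∈ Set.Icc (-(2*π/3)) (2*π/3)) :
    1/2 ≤ Real.cos (t/2) := by
  rcases ht with ⟨h1, h2⟩
  have habs : |t/2| ≤ π/3 := by rw [abs_le]; constructor <;> linarith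
  have hpi := Real.pi_pos
  rcases eq_or_lt_of_le habs with h | h
  · rw [← Real.cos_abs, h, Real.cos_pi_div_three]
  · have := Real.cos_lt_cos_of_nonneg_of_le_pi (abs_nonneg _) (by linarith : π/3 ≤ π) h
    rw [Real.cos_abs, Real.cos_pi_div_three] at this
    linarith

lemma oloid_cos_half_gt {t : ℝ} (ht : t ∈ Set.Ioo (-(2*π/3)) (2*π/3)) :
    1/2 < Real.cos (t/2) := by
  rcases ht with ⟨h1, h2⟩
  have habs : |t/2| < π/3 := by rw [abs_lt]; constructor <;> linarith
  have hpi := Real.pi_pos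
  have := Real.cos_lt_cos_of_nonneg_of_le_pi (abs_nonneg _) (by linarith : π/3 ≤ π) habs
  rw [Real.cos_abs, Real.cos_pi_div_three] at this
  linarith

set_option maxHeartbeats 1000000 in
lemma oloid_hasDerivAt {t : ℝ} (ht : t ∈ Set.Ioo (-(2*π/3)) (2*π/3)) :
    HasDerivAt oloidF
      ((Real.cos t + 2) / (Real.cos (t/2) * Real.sqrt (2 * Real.cos t + 1))) t := by
  have hc : 1/2 < Real.cos (t/2) := oloid_cos_half_gt ht
  set c := Real.cos (t/2) with hcdef
  set s := Real.sin (t/2) with hsdef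
  have hsc : s^2 + c^2 = 1 := Real.sin_sq_add_cos_sq _
  have hcost : Real.cos t = 2*c^2 - 1 := by
    have h2 := Real.cos_two_mul (t/2)
    have h2t : 2*(t/2) = t := by ring
    rw [h2t] at h2
    rw [h2, hcdef]
  have hq : 2 * Real.cos t + 1 = 4*c^2 - 1 := by rw [hcost]; ring
  have hqpos : 0 < 2 * Real.cos t + 1 := by rw [hq]; nlinarith
  have h3 : (0:ℝ) < Real.sqrt 3 := Real.sqrt_pos.2 (by norm_num)
  have h3sq : Real.sqrt 3 ^ 2 = 3 := Real.sq_sqrt (by norm_num)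
  have hqsq : Real.sqrt (2 * Real.cos t + 1) ^ 2 = 2 * Real.cos t + 1 :=
    Real.sq_sqrt hqpos.le
  have hqs : 0 < Real.sqrt (2 * Real.cos t + 1) := Real.sqrt_pos.2 hqpos
  have hcpos : 0 < c := by linarith
  -- inner derivatives
  have hhalf : HasDerivAt (fun t : ℝ => t/2) (1/2) t := (hasDerivAt_id t).div_const 2
  have hsin : HasDerivAt (fun t : ℝ => Real.sin (t/2)) (c * (1/2)) t :=
    by have := (Real.hasDerivAt_sin (t/2)).comp t hhalf; exact this
  have hg1 : HasDerivAt (fun t : ℝ => 2 * Real.sin (t/2) / Real.sqrt 3)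
      (2 * (c * (1/2)) / Real.sqrt 3) t := (hsin.const_mul 2).div_const _
  have htan : HasDerivAt (fun t : ℝ => Real.tan (t/2)) (1 / c^2 * (1/2)) t :=
    by have := (Real.hasDerivAt_tan (by positivity : c ≠ 0)).comp t hhalf; exact this
  have hg2 : HasDerivAt (fun t : ℝ => Real.tan (t/2) / Real.sqrt 3)
      (1 / c^2 * (1/2) / Real.sqrt 3) t := htan.div_const _
  -- bounds for arcsin arguments
  have hs2 : 4 * s^2 < 3 := by nlinarith
  have hx1 : (2 * s / Real.sqrt 3)^2 < 1 := by
    rw [div_pow, h3sq]; rw [div_lt_one (by norm_num)]; nlinarith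
  have htanval : Real.tan (t/2) = s / c := Real.tan_eq_sin_div_cos _
  have hx2 : (Real.tan (t/2) / Real.sqrt 3)^2 < 1 := by
    rw [htanval, div_pow, div_pow, h3sq, div_div, div_lt_one (by positivity)]
    nlinarith
  have habs1 : |2 * s / Real.sqrt 3| < 1 := (sq_lt_one_iff_abs_lt_one _).1 hx1
  have habs2 : |Real.tan (t/2) / Real.sqrt 3| < 1 := (sq_lt_one_iff_abs_lt_one _).1 hx2
  have ha1 := Real.hasDerivAt_arcsin (abs_lt.1 habs1).1.ne' (abs_lt.1 habs1).2.ne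
  have ha2 := Real.hasDerivAt_arcsin (abs_lt.1 habs2).1.ne' (abs_lt.1 habs2).2.ne
  have hA1 := (ha1.comp t hg1).const_mul 2
  have hA2 := (ha2.comp t hg2).const_mul 2
  have hD := hA1.add hA2
  convert hD using 1
  case e'_4 => rfl
  case e'_5 => rfl
  case e'_8 => rfl
  -- simplify the sqrt expressions
  have e1 : 1 - (2 * s / Real.sqrt 3)^2 = (2 * Real.cos t + 1) / 3 := by
    rw [div_pow, h3sq, hq]; field_simp; nlinarith
  have e2 : 1 - (Real.tan (t/2) / Real.sqrt 3)^2 = (2 * Real.cos t + 1) / (3 * c^2) := by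
    rw [htanval, div_pow, div_pow, h3sq, div_div, hq]
    field_simp
    nlinarith
  rw [e1, e2]
  have r1 : Real.sqrt ((2 * Real.cos t + 1) / 3)
      = Real.sqrt (2 * Real.cos t + 1) / Real.sqrt 3 := Real.sqrt_div hqpos.le 3
  have r2 : Real.sqrt ((2 * Real.cos t + 1) / (3 * c^2))
      = Real.sqrt (2 * Real.cos t + 1) / (Real.sqrt 3 * c) := by
    rw [Real.sqrt_div hqpos.le, Real.sqrt_mul (by norm_num : (0:ℝ) ≤ 3),
      Real.sqrt_sq hcpos.le]
  rw [r1, r2, hcost]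
  have h4 : Real.sqrt (2 * (2*c^2 - 1) + 1) = Real.sqrt (4*c^2 - 1) := by ring_nf
  rw [h4] at *
  have hq4 : (0:ℝ) < Real.sqrt (4*c^2 - 1) := by
    apply Real.sqrt_pos.2; nlinarith
  field_simp
  ring

lemma oloid_contOn :
    ContinuousOn oloidF (Set.Icc (-(2*π/3)) (2*π/3)) := by
  unfold oloidF
  have hc1 : ContinuousOn (fun t : ℝ => 2 * Real.sin (t/2) / Real.sqrt 3)
      (Set.Icc (-(2*π/3)) (2*π/3)) := by
    fun_prop
  have hc2 : ContinuousOn (fun t : ℝ => Real.tan (t/2) / Real.sqrt 3)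
      (Set.Icc (-(2*π/3)) (2*π/3)) := by
    apply ContinuousOn.div_const
    intro t ht
    have h := oloid_cos_half_ge ht
    have hct : Real.cos (t/2) ≠ 0 := by intro h0; rw [h0] at h; norm_num at h
    have hdiv : ContinuousAt (fun x : ℝ => x/2) t := (continuous_id.div_const 2).continuousAt
    have hcomp := ContinuousAt.comp (g := Real.tan) (f := fun x : ℝ => x/2)
      (Real.continuousAt_tan.2 hct) hdiv
    exact hcomp.continuousWithinAt
  exact (continuousOn_const.mul (Real.continuous_arcsin.comp_continuousOn hc1)).add
    (continuousOn_const.mul (Real.continuous_arcsin.comp_continuousOn hc2))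

lemma oloid_nonneg {t : ℝ} (ht : t ∈ Set.Ioo (-(2*π/3)) (2*π/3)) :
    0 ≤ (Real.cos t + 2) / (Real.cos (t/2) * Real.sqrt (2 * Real.cos t + 1)) := by
  have hc := oloid_cos_half_gt ht
  have h1 : -1 ≤ Real.cos t := Real.neg_one_le_cos t
  have h2 : 0 ≤ Real.sqrt (2 * Real.cos t + 1) := Real.sqrt_nonneg _
  apply div_nonneg (by linarith)
  positivity

lemma oloid_endpoint : oloidF (2*π/3) = 2 * π := by
  unfold oloidF
  have h1 : (2*π/3)/2 = π/3 := by ring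
  rw [h1, Real.sin_pi_div_three, Real.tan_pi_div_three]
  have h3 : Real.sqrt 3 ≠ 0 := by positivity
  rw [show 2 * (Real.sqrt 3 / 2) / Real.sqrt 3 = 1 by field_simp,
    div_self h3, Real.arcsin_one]
  ring

lemma oloid_endpoint_neg : oloidF (-(2*π/3)) = -(2 * π) := by
  unfold oloidF
  have h1 : (-(2*π/3))/2 = -(π/3) := by ring
  rw [h1, Real.sin_neg, Real.tan_neg, Real.sin_pi_div_three, Real.tan_pi_div_three]
  have h3 : Real.sqrt 3 ≠ 0 := by positivity
  rw [show 2 * -(Real.sqrt 3 / 2) / Real.sqrt 3 = -1 by field_simp,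
    show -Real.sqrt 3 / Real.sqrt 3 = -1 by field_simp,
    Real.arcsin_neg_one]
  ring

theorem oloid_area_integral :
    ∫ t in (-(2*π/3))..(2*π/3),
        (Real.cos t + 2) / (Real.cos (t/2) * Real.sqrt (2 * Real.cos t + 1)) = 4 * π := by
  have hpi := Real.pi_pos
  have hab : -(2*π/3) ≤ 2*π/3 := by linarith
  have hint : IntervalIntegrable
      (fun t => (Real.cos t + 2) / (Real.cos (t/2) * Real.sqrt (2 * Real.cos t + 1)))
      MeasureTheory.volume (-(2*π/3)) (2*π/3) := by
    apply intervalIntegral.intervalIntegrable_deriv_of_nonneg (g := oloidF)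
    · rw [Set.uIcc_of_le hab]
      exact oloid_contOn
    · rw [min_eq_left hab, max_eq_right hab]
      exact fun x hx => oloid_hasDerivAt hx
    · rw [min_eq_left hab, max_eq_right hab]
      exact fun x hx => oloid_nonneg hx
  rw [intervalIntegral.integral_eq_sub_of_hasDerivAt_of_le hab oloid_contOn
    (fun x hx => oloid_hasDerivAt hx) hint, oloid_endpoint, oloid_endpoint_neg]
  ring
end

section
/- For every t ∈ (−2π/3, 2π/3), the inner m-integral of the I_xx surface integrand satisfies: ∫₀¹ cos t·((3m−2)cos t − 1)·(m/(cos t + 1) + (m−1)cos t − 1/2)·(m²(2 cos t + 1)/(cos t + 1)² + (m−1)² sin²t) / (cos²(t/2)·√(2 cos t + 1)) dm = −cos²t·(−2510 cos t + 547 cos 2t + 1129 cos 3t + 648 cos 4t + 181 cos 5t + 21 cos 6t − 1744) / (15360 cos⁸(t/2)·√(2 cos t + 1)). -/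
open Real

private lemma hasDerivAt_quintic (a1 a2 a3 a4 a5 x : ℝ) :
    HasDerivAt (fun y => a1*y + a2*y^2 + a3*y^3 + a4*y^4 + a5*y^5)
      (a1 + 2*a2*x + 3*a3*x^2 + 4*a4*x^3 + 5*a5*x^4) x := by
  have h1 := (hasDerivAt_id x).const_mul a1
  have h2 := (hasDerivAt_pow 2 x).const_mul a2
  have h3 := (hasDerivAt_pow 3 x).const_mul a3
  have h4 := (hasDerivAt_pow 4 x).const_mul a4
  have h5 := (hasDerivAt_pow 5 x).const_mul a5
  refine ((((h1.add h2).add h3).add h4).add h5).congr_deriv ?_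
  push_cast
  ring

set_option maxHeartbeats 2000000 in
theorem oloid_Ixx_inner_m_integral :
    ∀ t ∈ Set.Ioo (-(2*π/3)) (2*π/3),
      ∫ m in (0:ℝ)..1,
          Real.cos t * ((3*m - 2) * Real.cos t - 1) *
              (m / (Real.cos t + 1) + (m - 1) * Real.cos t - 1/2) *
              (m^2 * (2 * Real.cos t + 1) / (Real.cos t + 1)^2 +
                (m - 1)^2 * Real.sin t ^ 2) /
            (Real.cos (t/2) ^ 2 * Real.sqrt (2 * Real.cos t + 1)) =
        -(Real.cos t ^ 2 *
            (-2510 * Real.cos t + 547 * Real.cos (2*t) + 1129 * Real.cos (3*t) +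
              648 * Real.cos (4*t) + 181 * Real.cos (5*t) + 21 * Real.cos (6*t) - 1744)) /
          (15360 * Real.cos (t/2) ^ 8 * Real.sqrt (2 * Real.cos t + 1)) := by
  intro t ht
  obtain ⟨ht1, ht2⟩ := ht
  have hπ := Real.pi_pos
  have habs : |t| < 2*π/3 := abs_lt.mpr ⟨by linarith, ht2⟩
  have h23 : Real.cos (2*π/3) = -(1/2) := by
    rw [show 2*π/3 = π - π/3 by ring, Real.cos_pi_sub, Real.cos_pi_div_three]
  have hc : -(1/2) < Real.cos t := by
    rw [← h23, ← Real.cos_abs t]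
    exact Real.cos_lt_cos_of_nonneg_of_le_pi (abs_nonneg t) (by linarith) habs
  set c := Real.cos t with hc0
  have hR : (0:ℝ) < 2*c + 1 := by linarith
  have hcp1 : (0:ℝ) < c + 1 := by linarith
  have hsqrt : Real.sqrt (2*c + 1) ≠ 0 := (Real.sqrt_pos.mpr hR).ne'
  have hcoshpos : 0 < Real.cos (t/2) := by
    apply Real.cos_pos_of_mem_Ioo
    constructor
    · rw [lt_div_iff₀ (by norm_num : (0:ℝ) < 2)] at *
      nlinarith [abs_lt.mp habs]
    · nlinarith [abs_lt.mp habs]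
  have hcosh : Real.cos (t/2) ≠ 0 := hcoshpos.ne'
  have hs2 : Real.sin t ^ 2 = 1 - c^2 := by rw [Real.sin_sq, ← hc0]
  have hhalf : Real.cos (t/2) ^ 2 = (1 + c)/2 := by
    rw [Real.cos_sq, show 2*(t/2) = t by ring, ← hc0]; ring
  set a1 : ℝ := (1/2:ℝ) * c^1 + (7/2:ℝ) * c^2 + (9:ℝ) * c^3 + (9:ℝ) * c^4 + (-3/2:ℝ) * c^5 + (-21/2:ℝ) * c^6 + (-8:ℝ) * c^7 + (-2:ℝ) * c^8 with ha1
  set a2 : ℝ := (-1:ℝ) * c^1 + (-27/4:ℝ) * c^2 + (-69/4:ℝ) * c^3 + (-18:ℝ) * c^4 + (3/2:ℝ) * c^5 + (81/4:ℝ) * c^6 + (67/4:ℝ) * c^7 + (9/2:ℝ) * c^8 with ha2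
  set a3 : ℝ := (1:ℝ) * c^1 + (23/3:ℝ) * c^2 + (20:ℝ) * c^3 + (64/3:ℝ) * c^4 + (5/6:ℝ) * c^5 + (-39/2:ℝ) * c^6 + (-52/3:ℝ) * c^7 + (-5:ℝ) * c^8 with ha3
  set a4 : ℝ := (-1/2:ℝ) * c^1 + (-19/4:ℝ) * c^2 + (-51/4:ℝ) * c^3 + (-14:ℝ) * c^4 + (-5/2:ℝ) * c^5 + (75/8:ℝ) * c^6 + (71/8:ℝ) * c^7 + (11/4:ℝ) * c^8 with ha4
  set a5 : ℝ := (6/5:ℝ) * c^2 + (18/5:ℝ) * c^3 + (18/5:ℝ) * c^4 + (6/5:ℝ) * c^5 + (-9/5:ℝ) * c^6 + (-9/5:ℝ) * c^7 + (-3/5:ℝ) * c^8 with ha5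
  set K : ℝ := (c + 1)^3 * (Real.cos (t/2) ^ 2 * Real.sqrt (2*c + 1)) with hKdef
  have hK : K ≠ 0 := by
    rw [hKdef]
    positivity
  have hderiv : ∀ m ∈ Set.uIcc (0:ℝ) 1,
      HasDerivAt (fun y : ℝ => (a1*y + a2*y^2 + a3*y^3 + a4*y^4 + a5*y^5)/K)
        (c * ((3*m - 2) * c - 1) *
              (m / (c + 1) + (m - 1) * c - 1/2) *
              (m^2 * (2 * c + 1) / (c + 1)^2 +
                (m - 1)^2 * Real.sin t ^ 2) /
            (Real.cos (t/2) ^ 2 * Real.sqrt (2 * c + 1))) m := by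
    intro m _
    have h := (hasDerivAt_quintic a1 a2 a3 a4 a5 m).div_const K
    have heq : (a1 + 2*a2*m + 3*a3*m^2 + 4*a4*m^3 + 5*a5*m^4)/K =
        c * ((3*m - 2) * c - 1) *
            (m / (c + 1) + (m - 1) * c - 1/2) *
            (m^2 * (2 * c + 1) / (c + 1)^2 +
              (m - 1)^2 * Real.sin t ^ 2) /
          (Real.cos (t/2) ^ 2 * Real.sqrt (2 * c + 1)) := by
      rw [hs2, ha1, ha2, ha3, ha4, ha5, hKdef]
      field_simp
      ring
    rw [heq] at h
    exact h
  have hint : IntervalIntegrable (fun m : ℝ =>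
      c * ((3*m - 2) * c - 1) *
            (m / (c + 1) + (m - 1) * c - 1/2) *
            (m^2 * (2 * c + 1) / (c + 1)^2 +
              (m - 1)^2 * Real.sin t ^ 2) /
          (Real.cos (t/2) ^ 2 * Real.sqrt (2 * c + 1)))
      MeasureTheory.volume 0 1 := by
    apply Continuous.intervalIntegrable
    fun_prop
  have key := intervalIntegral.integral_eq_sub_of_hasDerivAt hderiv hint
  rw [key]
  have h2t : Real.cos (2*t) = 2*c^2 - 1 := by rw [Real.cos_two_mul, ← hc0]
  have h3t : Real.cos (3*t) = 4*c^3 - 3*c := by rw [Real.cos_three_mul, ← hc0]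
  have h4t : Real.cos (4*t) = 2*(2*c^2 - 1)^2 - 1 := by
    rw [show (4:ℝ)*t = 2*(2*t) by ring, Real.cos_two_mul, h2t]
  have h6t : Real.cos (6*t) = 2*(4*c^3 - 3*c)^2 - 1 := by
    rw [show (6:ℝ)*t = 2*(3*t) by ring, Real.cos_two_mul, h3t]
  have h5t : Real.cos (5*t) = 16*c^5 - 20*c^3 + 5*c := by
    rw [show (5:ℝ)*t = 2*t + 3*t by ring, Real.cos_add, Real.cos_two_mul,
      Real.cos_three_mul, Real.sin_two_mul, Real.sin_three_mul, ← hc0]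
    linear_combination (2*c*(4*Real.sin t^2 - 4*c^2 + 1)) * hs2
  have h8 : Real.cos (t/2)^8 = (1 + c)^4/16 := by
    rw [show Real.cos (t/2)^8 = (Real.cos (t/2)^2)^4 by ring, hhalf]; ring
  have hD : (15360 * Real.cos (t/2)^8 * Real.sqrt (2*c+1)) ≠ 0 := by
    refine mul_ne_zero (mul_ne_zero (by norm_num) (pow_ne_zero _ hcosh)) hsqrt
  rw [div_sub_div_same, div_eq_div_iff hK hD, h2t, h3t, h4t, h5t, h6t, h8,
    ha1, ha2, ha3, ha4, ha5, hKdef, hhalf]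
  ring
end
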